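/- Let Ω be a convex domain in ℝ^N and let F₁ and F₂ be admissible on an open interval I such that F₁-concavity is nontrivial in Ω. Then C_Ω[F₁] = C_Ω[F₂] if and only if there exist A ∈ (0,∞) and B ∈ ℝ such that F₁(τ) = A·F₂(τ) + B for all τ ∈ I. -/

import Mathlib

open Set

/-- `f : Ω → ℝ` is `F`-concave in `Ω`, for a real-valued `F`. -/
def FConcaveOnR {N : ℕ} (Ω : Set (EuclideanSpace ℝ (Fin N))) (F : ℝ → ℝ)
    (f : EuclideanSpace ℝ (Fin N) → ℝ) : Prop :=
  ∀ x ∈ Ω, ∀ y ∈ Ω, ∀ μ ∈ Set.Icc (0 : ℝ) 1,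
    (1 - μ) * F (f x) + μ * F (f y) ≤ F (f ((1 - μ) • x + μ • y))

/-- Points of the image of `I` lying between two image points are in the image. -/
lemma mem_image_of_between' {I : Set ℝ} (hIconn : I.OrdConnected) {F : ℝ → ℝ}
    (hcont : ContinuousOn F I) {u w t : ℝ} (hu : u ∈ F '' I) (hw : w ∈ F '' I)
    (hut : u ≤ t) (htw : t ≤ w) : t ∈ F '' I := by
  obtain ⟨α, hα, rfl⟩ := hu
  obtain ⟨β, hβ, rfl⟩ := hw
  rcases le_total α β with h | h
  · exact image_mono (hIconn.out hα hβ)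
      (intermediate_value_Icc h (hcont.mono (hIconn.out hα hβ)) ⟨hut, htw⟩)
  · exact image_mono (hIconn.out hβ hα)
      (intermediate_value_Icc' h (hcont.mono (hIconn.out hβ hα)) ⟨hut, htw⟩)

/-- Construction of convenient test functions. -/
lemma exists_affine_test {N : ℕ} {Ω : Set (EuclideanSpace ℝ (Fin N))} (hΩopen : IsOpen Ω)
    (hΩconv : Convex ℝ Ω)
    {I : Set ℝ} (hIopen : IsOpen I) (hIconn : I.OrdConnected)
    {F₁ : ℝ → ℝ} (hF₁cont : ContinuousOn F₁ I) (hF₁mono : StrictMonoOn F₁ I)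
    {f₀ : EuclideanSpace ℝ (Fin N) → ℝ} (hf₀I : ∀ x ∈ Ω, f₀ x ∈ I)
    (hf₀c : FConcaveOnR Ω F₁ f₀)
    {x₀ y₀ : EuclideanSpace ℝ (Fin N)} (hx₀ : x₀ ∈ Ω) (hy₀ : y₀ ∈ Ω)
    (hne : f₀ x₀ ≠ f₀ y₀)
    {σ τ : ℝ} (hσ : σ ∈ I) (hτ : τ ∈ I) (hστ : σ < τ) :
      ∃ x ∈ Ω, ∃ y ∈ Ω, ∃ h : EuclideanSpace ℝ (Fin N) → ℝ,
        (∀ x' ∈ Ω, ∀ y' ∈ Ω, ∀ μ' ∈ Icc (0:ℝ) 1,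
          h ((1 - μ') • x' + μ' • y') = (1 - μ') * h x' + μ' * h y') ∧
        h x = F₁ σ ∧ h y = F₁ τ ∧ (∀ w ∈ Ω, min (F₁ τ) (h w) ∈ F₁ '' I) := by
  have hpq : F₁ σ < F₁ τ := hF₁mono hσ hτ hστ
  have hpJ : F₁ σ ∈ F₁ '' I := ⟨σ, hσ, rfl⟩
  have hqJ : F₁ τ ∈ F₁ '' I := ⟨τ, hτ, rfl⟩
  by_cases hbb : BddBelow (F₁ '' I)
  · -- the image is bounded below
    have hJne : (F₁ '' I).Nonempty := ⟨F₁ σ, hpJ⟩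
    obtain ⟨a, ha⟩ : ∃ a : ℝ, a = sInf (F₁ '' I) := ⟨_, rfl⟩
    have haJ : ∀ t ∈ F₁ '' I, a < t := by
      rintro t ⟨α, hα, rfl⟩
      obtain ⟨ε, hε, hball⟩ := Metric.isOpen_iff.1 hIopen α hα
      have hα' : α - ε / 2 ∈ I := by
        apply hball
        rw [Metric.mem_ball, Real.dist_eq,
          show α - ε / 2 - α = -(ε / 2) by ring, abs_neg, abs_of_nonneg (by linarith)]
        linarith
      calc a ≤ F₁ (α - ε / 2) := ha ▸ csInf_le hbb ⟨_, hα', rfl⟩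
        _ < F₁ α := hF₁mono hα' hα (by linarith)
    by_cases huniv : Ω = univ
    · -- Ω = ℝ^N : impossible
      exfalso
      have hmemΩ : ∀ z : EuclideanSpace ℝ (Fin N), z ∈ Ω := fun z => huniv ▸ mem_univ z
      have hval : ∀ z, a < F₁ (f₀ z) := fun z => haJ _ ⟨f₀ z, hf₀I z (hmemΩ z), rfl⟩
      have hneq : F₁ (f₀ x₀) ≠ F₁ (f₀ y₀) := fun hh =>
        hne (hF₁mono.injOn (hf₀I _ hx₀) (hf₀I _ hy₀) hh)
      have main : ∀ u v : EuclideanSpace ℝ (Fin N), F₁ (f₀ v) < F₁ (f₀ u) → False := by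
        intro u v hgt
        have hden : 0 < F₁ (f₀ u) - F₁ (f₀ v) := by linarith
        have hg0a : a < F₁ (f₀ u) := hval u
        obtain ⟨t, hht⟩ : ∃ t : ℝ, t = (F₁ (f₀ u) - a) / (F₁ (f₀ u) - F₁ (f₀ v)) + 1 := ⟨_, rfl⟩
        have hdivpos : 0 < (F₁ (f₀ u) - a) / (F₁ (f₀ u) - F₁ (f₀ v)) :=
          div_pos (by linarith) hden
        have ht1 : 1 < t := by rw [hht]; linarith
        have ht0 : 0 < t := by linarith
        have hcombo : (1 - 1 / t) • u + (1 / t) • (u + t • (v - u)) = v := by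
          rw [smul_add, smul_smul, one_div, inv_mul_cancel₀ (ne_of_gt ht0), one_smul,
            ← add_assoc, ← add_smul, show 1 - t⁻¹ + t⁻¹ = 1 by ring, one_smul]
          abel
        have hineq := hf₀c u (hmemΩ u) (u + t • (v - u)) (hmemΩ _) (1 / t)
          ⟨by positivity, by rw [div_le_one ht0]; linarith⟩
        rw [hcombo] at hineq
        have hza := hval (u + t • (v - u))
        have h2 : (1 - 1 / t) * F₁ (f₀ u) + (1 / t) * a < F₁ (f₀ v) := by
          have := mul_lt_mul_of_pos_left hza (show (0:ℝ) < 1 / t by positivity)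
          linarith
        have h3 : t * ((1 - 1 / t) * F₁ (f₀ u) + (1 / t) * a) < t * F₁ (f₀ v) :=
          mul_lt_mul_of_pos_left h2 ht0
        have he : t * ((1 - 1 / t) * F₁ (f₀ u) + (1 / t) * a)
            = (t - 1) * F₁ (f₀ u) + a := by
          field_simp
        rw [he] at h3
        have htg : t * (F₁ (f₀ u) - F₁ (f₀ v))
            = (F₁ (f₀ u) - a) + (F₁ (f₀ u) - F₁ (f₀ v)) := by
          rw [hht]; field_simp
        nlinarith
      rcases lt_or_gt_of_ne hneq with hlt | hlt
      · exact main y₀ x₀ hlt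
      · exact main x₀ y₀ hlt
    · -- Ω ≠ ℝ^N : use a separating functional
      obtain ⟨z, hz⟩ : ∃ z, z ∉ Ω := by
        by_contra hc; push_neg at hc; exact huniv (eq_univ_iff_forall.mpr hc)
      obtain ⟨ξ, hξ⟩ := geometric_hahn_banach_open_point hΩconv hΩopen hz
      obtain ⟨ℓ, hℓ⟩ : ∃ ℓ : EuclideanSpace ℝ (Fin N) → ℝ, ℓ = fun w => -ξ w := ⟨_, rfl⟩
      have hℓval : ∀ w, ℓ w = -ξ w := fun w => by rw [hℓ]
      have hSne : (ℓ '' Ω).Nonempty := ⟨ℓ x₀, x₀, hx₀, rfl⟩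
      have hSbb : BddBelow (ℓ '' Ω) := by
        refine ⟨-ξ z, ?_⟩
        rintro s ⟨w, hw, rfl⟩
        have := hξ w hw
        rw [hℓval]
        linarith
      obtain ⟨m, hm⟩ : ∃ m : ℝ, m = sInf (ℓ '' Ω) := ⟨_, rfl⟩
      have hmle : ∀ w ∈ Ω, m ≤ ℓ w := fun w hw => hm ▸ csInf_le hSbb ⟨w, hw, rfl⟩
      have hu : 0 < ξ (z - x₀) := by
        have := hξ x₀ hx₀
        rw [map_sub]; linarith
      have hune : z - x₀ ≠ 0 := by
        intro hc; rw [hc, map_zero] at hu; exact lt_irrefl 0 hu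
      obtain ⟨ε, hε, hball⟩ := Metric.isOpen_iff.1 hΩopen x₀ hx₀
      have hnu : 0 < ‖z - x₀‖ := norm_pos_iff.mpr hune
      have hz₁Ω : x₀ - (ε / (2 * ‖z - x₀‖)) • (z - x₀) ∈ Ω := by
        apply hball
        rw [Metric.mem_ball, dist_eq_norm,
          show x₀ - (ε / (2 * ‖z - x₀‖)) • (z - x₀) - x₀ = -((ε / (2 * ‖z - x₀‖)) • (z - x₀))
            by abel,
          norm_neg, norm_smul, Real.norm_eq_abs, abs_of_nonneg (by positivity),
          div_mul_eq_mul_div, mul_comm,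
          show ‖z - x₀‖ * ε / (2 * ‖z - x₀‖) = (ε / 2) * (‖z - x₀‖ / ‖z - x₀‖) by ring,
          div_self (ne_of_gt hnu)]
        linarith
      obtain ⟨z₁, hz₁Ω', hz₁eq⟩ : ∃ z₁ ∈ Ω, z₁ = x₀ - (ε / (2 * ‖z - x₀‖)) • (z - x₀) :=
        ⟨_, hz₁Ω, rfl⟩
      have hz₁gt : m < ℓ z₁ := by
        have h1 : ℓ z₁ = -ξ x₀ + (ε / (2 * ‖z - x₀‖)) * ξ (z - x₀) := by
          rw [hℓval, hz₁eq, map_sub, map_smul, smul_eq_mul]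
          ring
        have h2 : m ≤ ℓ x₀ := hmle x₀ hx₀
        have h3 : ℓ x₀ = -ξ x₀ := hℓval x₀
        have h4 : 0 < (ε / (2 * ‖z - x₀‖)) * ξ (z - x₀) := by positivity
        linarith
      have hap : a < F₁ σ := haJ _ hpJ
      obtain ⟨a', ha'⟩ : ∃ a' : ℝ, a' = (a + F₁ σ) / 2 := ⟨_, rfl⟩
      have ha'a : a < a' := by rw [ha']; linarith
      have ha'p : a' < F₁ σ := by rw [ha']; linarith
      obtain ⟨A, hA⟩ : ∃ A : ℝ, A = (F₁ τ - a' + 1) / (ℓ z₁ - m) := ⟨_, rfl⟩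
      have hApos : 0 < A := by rw [hA]; exact div_pos (by linarith) (by linarith)
      obtain ⟨h, hh⟩ : ∃ h : EuclideanSpace ℝ (Fin N) → ℝ,
          h = fun w => A * (ℓ w - m) + a' := ⟨_, rfl⟩
      have hhval : ∀ w, h w = A * (ℓ w - m) + a' := fun w => by rw [hh]
      have hz₁val : h z₁ = F₁ τ + 1 := by
        rw [hhval, hA, div_mul_eq_mul_div, mul_div_assoc,
          div_self (by linarith : ℓ z₁ - m ≠ 0)]
        ring
      have hge : ∀ w ∈ Ω, a' ≤ h w := by
        intro w hw
        have h1 : 0 ≤ A * (ℓ w - m) := mul_nonneg hApos.le (by linarith [hmle w hw])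
        rw [hhval]; linarith
      obtain ⟨s2, ⟨z₂, hz₂Ω, rfl⟩, hs2⟩ : ∃ s ∈ ℓ '' Ω, s < m + (F₁ σ - a') / A := by
        apply exists_lt_of_csInf_lt hSne
        rw [← hm]
        have : 0 < (F₁ σ - a') / A := div_pos (by linarith) hApos
        linarith
      have hz₂val : h z₂ < F₁ σ := by
        rw [hhval]
        have h1 : A * (ℓ z₂ - m) < A * ((F₁ σ - a') / A) :=
          mul_lt_mul_of_pos_left (by linarith) hApos
        rw [mul_div_cancel₀ _ (ne_of_gt hApos)] at h1
        linarith
      have hcont2 : ContinuousOn h Ω := by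
        rw [hh, hℓ]
        exact ((continuous_const.mul (ξ.continuous.neg.sub continuous_const)).add
          continuous_const).continuousOn
      have hiv := (hΩconv.isPreconnected).intermediate_value hz₂Ω hz₁Ω' hcont2
      obtain ⟨x, hxΩ, hxp⟩ : ∃ x ∈ Ω, h x = F₁ σ := by
        obtain ⟨x, hx1, hx2⟩ := hiv (show F₁ σ ∈ Icc (h z₂) (h z₁) from
          ⟨hz₂val.le, by rw [hz₁val]; linarith⟩)
        exact ⟨x, hx1, hx2⟩
      obtain ⟨y, hyΩ, hyq⟩ : ∃ y ∈ Ω, h y = F₁ τ := by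
        obtain ⟨y, hy1, hy2⟩ := hiv (show F₁ τ ∈ Icc (h z₂) (h z₁) from
          ⟨by linarith [hz₂val], by rw [hz₁val]; linarith⟩)
        exact ⟨y, hy1, hy2⟩
      refine ⟨x, hxΩ, y, hyΩ, h, ?_, hxp, hyq, ?_⟩
      · intro x' _ y' _ μ' _
        rw [hhval, hhval, hhval, hℓval, hℓval, hℓval, map_add, map_smul, map_smul,
          smul_eq_mul, smul_eq_mul]
        ring
      · intro w hw
        obtain ⟨j, hjJ, hja'⟩ : ∃ j ∈ F₁ '' I, j < a' := by
          apply exists_lt_of_csInf_lt hJne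
          rw [← ha]; exact ha'a
        apply mem_image_of_between' hIconn hF₁cont hjJ hqJ
        · exact le_trans hja'.le (le_min (by linarith) (hge w hw))
        · exact min_le_left _ _
  · -- the image is unbounded below
    have hbb' : ∀ M : ℝ, ∃ j ∈ F₁ '' I, j < M := by
      rw [not_bddBelow_iff] at hbb; exact hbb
    have hxy : x₀ ≠ y₀ := fun hc => hne (by rw [hc])
    obtain ⟨i, hi⟩ : ∃ i, x₀ i ≠ y₀ i := by
      by_contra hc; push_neg at hc; exact hxy (PiLp.ext hc)
    obtain ⟨d, hd⟩ : ∃ d : ℝ, d = y₀ i - x₀ i := ⟨_, rfl⟩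
    have hd0 : d ≠ 0 := by rw [hd]; intro hc; exact hi (by linarith)
    obtain ⟨h, hh⟩ : ∃ h : EuclideanSpace ℝ (Fin N) → ℝ,
        h = fun w => F₁ σ + (F₁ τ - F₁ σ) * ((w i - x₀ i) / d) := ⟨_, rfl⟩
    have hhval : ∀ w, h w = F₁ σ + (F₁ τ - F₁ σ) * ((w i - x₀ i) / d) := fun w => by rw [hh]
    refine ⟨x₀, hx₀, y₀, hy₀, h, ?_, ?_, ?_, ?_⟩
    · intro x' _ y' _ μ' _
      have happ : ((1 - μ') • x' + μ' • y') i = (1 - μ') * x' i + μ' * y' i := by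
        simp [PiLp.add_apply, PiLp.smul_apply]
      rw [hhval, hhval, hhval, happ]
      field_simp
      ring
    · rw [hhval]; simp
    · rw [hhval, ← hd, div_self hd0]; ring
    · intro w hw
      obtain ⟨j, hjJ, hjlt⟩ := hbb' (min (F₁ τ) (h w))
      exact mem_image_of_between' hIconn hF₁cont hjJ hqJ hjlt.le (min_le_left _ _)

/-- Key lemma: one inclusion of concavity classes forces a one-sided affine relation. -/
lemma key_lemma {N : ℕ} {Ω : Set (EuclideanSpace ℝ (Fin N))} (hΩopen : IsOpen Ω)
    (hΩconv : Convex ℝ Ω)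
    {I : Set ℝ} (hIopen : IsOpen I) (hIconn : I.OrdConnected)
    {F₁ F₂ : ℝ → ℝ} (hF₁cont : ContinuousOn F₁ I) (hF₁mono : StrictMonoOn F₁ I)
    (hsub : ∀ f : EuclideanSpace ℝ (Fin N) → ℝ,
      (∀ x ∈ Ω, f x ∈ I) → FConcaveOnR Ω F₁ f → FConcaveOnR Ω F₂ f)
    {f₀ : EuclideanSpace ℝ (Fin N) → ℝ} (hf₀I : ∀ x ∈ Ω, f₀ x ∈ I)
    (hf₀c : FConcaveOnR Ω F₁ f₀)
    {x₀ y₀ : EuclideanSpace ℝ (Fin N)} (hx₀ : x₀ ∈ Ω) (hy₀ : y₀ ∈ Ω)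
    (hne : f₀ x₀ ≠ f₀ y₀)
    {σ τ : ℝ} (hσ : σ ∈ I) (hτ : τ ∈ I) (hστ : σ < τ)
    {μ : ℝ} (hμ : μ ∈ Icc (0:ℝ) 1) :
    ∃ ρ ∈ I, F₁ ρ = (1 - μ) * F₁ σ + μ * F₁ τ ∧ (1 - μ) * F₂ σ + μ * F₂ τ ≤ F₂ ρ := by
  set p := F₁ σ with hp
  set q := F₁ τ with hq
  have hpq : p < q := hF₁mono hσ hτ hστ
  have hpJ : p ∈ F₁ '' I := ⟨σ, hσ, rfl⟩
  have hqJ : q ∈ F₁ '' I := ⟨τ, hτ, rfl⟩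
  obtain ⟨x, hx, y, hy, h, haff, hxp, hyq, hmem⟩ :=
    exists_affine_test hΩopen hΩconv hIopen hIconn hF₁cont hF₁mono hf₀I hf₀c hx₀ hy₀ hne
      hσ hτ hστ
  set v : EuclideanSpace ℝ (Fin N) → ℝ := fun w => min q (h w) with hv
  have hvx : v x = p := by rw [hv]; simp only [hxp]; exact min_eq_right hpq.le
  have hvy : v y = q := by rw [hv]; simp only [hyq, min_self]; exact min_eq_left (le_of_eq hq)
  have hvconc : ∀ x' ∈ Ω, ∀ y' ∈ Ω, ∀ μ' ∈ Icc (0:ℝ) 1,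
      (1 - μ') * v x' + μ' * v y' ≤ v ((1 - μ') • x' + μ' • y') := by
    intro x' hx' y' hy' μ' hμ'
    have h1 : v ((1 - μ') • x' + μ' • y') = min q ((1 - μ') * h x' + μ' * h y') := by
      rw [hv]; simp only; rw [haff x' hx' y' hy' μ' hμ']
    rw [h1]
    have h2 := min_le_left q (h x')
    have h3 := min_le_right q (h x')
    have h4 := min_le_left q (h y')
    have h5 := min_le_right q (h y')
    have h6 := hμ'.1
    have h7 := hμ'.2
    apply le_min
    · nlinarith
    · nlinarith
  have hvmid : v ((1 - μ) • x + μ • y) = (1 - μ) * p + μ * q := by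
    rw [hv]; simp only; rw [haff x hx y hy μ hμ, hxp, hyq]
    exact min_eq_right (by nlinarith [hμ.1, hμ.2])
  classical
  set w : EuclideanSpace ℝ (Fin N) → ℝ :=
    fun z => if hh : ∃ s ∈ I, F₁ s = v z then hh.choose else σ with hwdef
  have hwI : ∀ z ∈ Ω, w z ∈ I ∧ F₁ (w z) = v z := by
    intro z hz
    have hh : ∃ s ∈ I, F₁ s = v z := by
      obtain ⟨s, hs, hseq⟩ := hmem z hz
      exact ⟨s, hs, hseq⟩
    rw [hwdef]
    simp only [dif_pos hh]
    exact ⟨hh.choose_spec.1, hh.choose_spec.2⟩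
  have hcomboMem : ∀ x' ∈ Ω, ∀ y' ∈ Ω, ∀ μ' ∈ Icc (0:ℝ) 1,
      (1 - μ') • x' + μ' • y' ∈ Ω := by
    intro x' hx' y' hy' μ' hμ'
    exact hΩconv hx' hy' (by linarith [hμ'.2]) hμ'.1 (by ring)
  have hwF₁ : FConcaveOnR Ω F₁ w := by
    intro x' hx' y' hy' μ' hμ'
    rw [(hwI _ hx').2, (hwI _ hy').2, (hwI _ (hcomboMem x' hx' y' hy' μ' hμ')).2]
    exact hvconc x' hx' y' hy' μ' hμ'
  have hwF₂ : FConcaveOnR Ω F₂ w := hsub w (fun z hz => (hwI z hz).1) hwF₁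
  have hmidΩ : (1 - μ) • x + μ • y ∈ Ω := hcomboMem x hx y hy μ hμ
  refine ⟨w ((1 - μ) • x + μ • y), (hwI _ hmidΩ).1, ?_, ?_⟩
  · rw [(hwI _ hmidΩ).2, hvmid]
  · have hkey := hwF₂ x hx y hy μ hμ
    have hwx : w x = σ := by
      apply hF₁mono.injOn (hwI x hx).1 hσ
      rw [(hwI x hx).2, hvx]
    have hwy : w y = τ := by
      apply hF₁mono.injOn (hwI y hy).1 hτ
      rw [(hwI y hy).2, hvy]
    rwa [hwx, hwy] at hkey

/-- Let `Ω` be a convex domain in `ℝ^N` and `F₁, F₂` admissible on an open interval `I` such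
that `F₁`-concavity is nontrivial in `Ω`. Then `C_Ω[F₁] = C_Ω[F₂]` iff `F₁ = A F₂ + B` on `I`
for some `A > 0` and `B ∈ ℝ`. -/
theorem stmt_3 {N : ℕ} (Ω : Set (EuclideanSpace ℝ (Fin N)))
    (hΩopen : IsOpen Ω) (hΩconv : Convex ℝ Ω) (hΩne : Ω.Nonempty)
    (I : Set ℝ) (hIopen : IsOpen I) (hIconn : I.OrdConnected) (hIne : I.Nonempty)
    (F₁ F₂ : ℝ → ℝ)
    (hF₁cont : ContinuousOn F₁ I) (hF₁mono : StrictMonoOn F₁ I)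
    (hF₂cont : ContinuousOn F₂ I) (hF₂mono : StrictMonoOn F₂ I)
    (hnontriv : ∃ f : EuclideanSpace ℝ (Fin N) → ℝ,
      (∀ x ∈ Ω, f x ∈ I) ∧ FConcaveOnR Ω F₁ f ∧ ∃ x ∈ Ω, ∃ y ∈ Ω, f x ≠ f y) :
    ({f : EuclideanSpace ℝ (Fin N) → ℝ | (∀ x ∈ Ω, f x ∈ I) ∧ FConcaveOnR Ω F₁ f} =
        {f : EuclideanSpace ℝ (Fin N) → ℝ | (∀ x ∈ Ω, f x ∈ I) ∧ FConcaveOnR Ω F₂ f}) ↔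
      ∃ A B : ℝ, 0 < A ∧ ∀ τ ∈ I, F₁ τ = A * F₂ τ + B := by
  constructor
  · -- hard direction
    intro hset
    obtain ⟨f₀, hf₀I, hf₀c, x₀, hx₀, y₀, hy₀, hne⟩ := hnontriv
    have hsub₁₂ : ∀ f : EuclideanSpace ℝ (Fin N) → ℝ,
        (∀ x ∈ Ω, f x ∈ I) → FConcaveOnR Ω F₁ f → FConcaveOnR Ω F₂ f := by
      intro f h1 h2
      have hmem : f ∈ {f : EuclideanSpace ℝ (Fin N) → ℝ |
          (∀ x ∈ Ω, f x ∈ I) ∧ FConcaveOnR Ω F₁ f} := ⟨h1, h2⟩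
      rw [hset] at hmem
      exact hmem.2
    have hsub₂₁ : ∀ f : EuclideanSpace ℝ (Fin N) → ℝ,
        (∀ x ∈ Ω, f x ∈ I) → FConcaveOnR Ω F₂ f → FConcaveOnR Ω F₁ f := by
      intro f h1 h2
      have hmem : f ∈ {f : EuclideanSpace ℝ (Fin N) → ℝ |
          (∀ x ∈ Ω, f x ∈ I) ∧ FConcaveOnR Ω F₂ f} := ⟨h1, h2⟩
      rw [← hset] at hmem
      exact hmem.2
    have hf₀c₂ : FConcaveOnR Ω F₂ f₀ := hsub₁₂ f₀ hf₀I hf₀c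
    have dagger : ∀ σ ∈ I, ∀ τ ∈ I, σ < τ → ∀ μ ∈ Icc (0:ℝ) 1,
        ∃ ρ ∈ I, F₁ ρ = (1 - μ) * F₁ σ + μ * F₁ τ ∧
          F₂ ρ = (1 - μ) * F₂ σ + μ * F₂ τ := by
      intro σ hσ τ hτ hστ μ hμ
      obtain ⟨ρ, hρI, hρ1, hρ2⟩ := key_lemma hΩopen hΩconv hIopen hIconn hF₁cont hF₁mono
        hsub₁₂ hf₀I hf₀c hx₀ hy₀ hne hσ hτ hστ hμ
      obtain ⟨ρ', hρ'I, hρ'1, hρ'2⟩ := key_lemma hΩopen hΩconv hIopen hIconn hF₂cont hF₂mono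
        hsub₂₁ hf₀I hf₀c₂ hx₀ hy₀ hne hσ hτ hστ hμ
      have hle : ρ ≤ ρ' := by
        by_contra hc
        push_neg at hc
        have h3 := hF₁mono hρ'I hρI hc
        rw [hρ1] at h3
        linarith
      have h4 : F₂ ρ ≤ F₂ ρ' := hF₂mono.monotoneOn hρI hρ'I hle
      rw [hρ'1] at h4
      exact ⟨ρ, hρI, hρ1, le_antisymm h4 hρ2⟩
    obtain ⟨t₀, ht₀⟩ := hIne
    obtain ⟨ε, hε, hball⟩ := Metric.isOpen_iff.1 hIopen t₀ ht₀
    have hτ₀I : t₀ + ε / 2 ∈ I := by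
      apply hball
      rw [Metric.mem_ball, Real.dist_eq, show t₀ + ε / 2 - t₀ = ε / 2 by ring,
        abs_of_nonneg (by linarith)]
      linarith
    have hσ₀τ₀ : t₀ < t₀ + ε / 2 := by linarith
    have hD₁ : 0 < F₁ (t₀ + ε / 2) - F₁ t₀ := by
      have := hF₁mono ht₀ hτ₀I hσ₀τ₀; linarith
    have hD₂ : 0 < F₂ (t₀ + ε / 2) - F₂ t₀ := by
      have := hF₂mono ht₀ hτ₀I hσ₀τ₀; linarith
    refine ⟨(F₁ (t₀ + ε / 2) - F₁ t₀) / (F₂ (t₀ + ε / 2) - F₂ t₀),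
      F₁ t₀ - (F₁ (t₀ + ε / 2) - F₁ t₀) / (F₂ (t₀ + ε / 2) - F₂ t₀) * F₂ t₀,
      div_pos hD₁ hD₂, ?_⟩
    intro τ hτ
    have hkey : (F₁ τ - F₁ t₀) * (F₂ (t₀ + ε / 2) - F₂ t₀)
        = (F₁ (t₀ + ε / 2) - F₁ t₀) * (F₂ τ - F₂ t₀) := by
      rcases eq_or_ne τ t₀ with rfl | h1
      · ring
      rcases eq_or_ne τ (t₀ + ε / 2) with rfl | h2
      · ring
      rcases lt_trichotomy τ t₀ with hc | hc | hc
      · -- τ < t₀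
        have hα : F₁ τ < F₁ t₀ := hF₁mono hτ ht₀ hc
        have hαγ : F₁ τ < F₁ (t₀ + ε / 2) := hF₁mono hτ hτ₀I (by linarith)
        obtain ⟨μv, hμv⟩ : ∃ m : ℝ, m = (F₁ t₀ - F₁ τ) / (F₁ (t₀ + ε / 2) - F₁ τ) := ⟨_, rfl⟩
        have hμmem : μv ∈ Icc (0:ℝ) 1 := by
          rw [hμv]
          exact ⟨div_nonneg (by linarith) (by linarith),
            by rw [div_le_one (by linarith)]; linarith⟩
        obtain ⟨ρ, hρI, hρ1, hρ2⟩ := dagger τ hτ (t₀ + ε / 2) hτ₀I (by linarith) μv hμmem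
        have hμd : μv * (F₁ (t₀ + ε / 2) - F₁ τ) = F₁ t₀ - F₁ τ := by
          rw [hμv, div_mul_cancel₀ _ (by linarith : F₁ (t₀ + ε / 2) - F₁ τ ≠ 0)]
        have hρτ : ρ = t₀ := by
          apply hF₁mono.injOn hρI ht₀
          rw [hρ1]; linear_combination hμd
        rw [hρτ] at hρ2
        linear_combination (F₁ (t₀ + ε / 2) - F₁ τ) * hρ2 + (F₂ (t₀ + ε / 2) - F₂ τ) * hμd
      · exact absurd hc h1
      rcases lt_trichotomy τ (t₀ + ε / 2) with hc2 | hc2 | hc2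
      · -- t₀ < τ < t₀ + ε/2
        have hα : F₁ t₀ < F₁ τ := hF₁mono ht₀ hτ hc
        have hαγ : F₁ τ < F₁ (t₀ + ε / 2) := hF₁mono hτ hτ₀I hc2
        obtain ⟨μv, hμv⟩ : ∃ m : ℝ, m = (F₁ τ - F₁ t₀) / (F₁ (t₀ + ε / 2) - F₁ t₀) := ⟨_, rfl⟩
        have hμmem : μv ∈ Icc (0:ℝ) 1 := by
          rw [hμv]
          exact ⟨div_nonneg (by linarith) (by linarith),
            by rw [div_le_one (by linarith)]; linarith⟩
        obtain ⟨ρ, hρI, hρ1, hρ2⟩ := dagger t₀ ht₀ (t₀ + ε / 2) hτ₀I hσ₀τ₀ μv hμmem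
        have hμd : μv * (F₁ (t₀ + ε / 2) - F₁ t₀) = F₁ τ - F₁ t₀ := by
          rw [hμv, div_mul_cancel₀ _ (by linarith : F₁ (t₀ + ε / 2) - F₁ t₀ ≠ 0)]
        have hρτ : ρ = τ := by
          apply hF₁mono.injOn hρI hτ
          rw [hρ1]; linear_combination hμd
        rw [hρτ] at hρ2
        linear_combination (-(F₁ (t₀ + ε / 2) - F₁ t₀)) * hρ2
          - (F₂ (t₀ + ε / 2) - F₂ t₀) * hμd
      · exact absurd hc2 h2
      · -- t₀ + ε/2 < τ
        have hα : F₁ t₀ < F₁ τ := hF₁mono ht₀ hτ hc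
        have hαγ : F₁ (t₀ + ε / 2) < F₁ τ := hF₁mono hτ₀I hτ hc2
        obtain ⟨μv, hμv⟩ : ∃ m : ℝ, m = (F₁ (t₀ + ε / 2) - F₁ t₀) / (F₁ τ - F₁ t₀) := ⟨_, rfl⟩
        have hμmem : μv ∈ Icc (0:ℝ) 1 := by
          rw [hμv]
          exact ⟨div_nonneg (by linarith) (by linarith),
            by rw [div_le_one (by linarith)]; linarith⟩
        obtain ⟨ρ, hρI, hρ1, hρ2⟩ := dagger t₀ ht₀ τ hτ hc μv hμmem
        have hμd : μv * (F₁ τ - F₁ t₀) = F₁ (t₀ + ε / 2) - F₁ t₀ := by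
          rw [hμv, div_mul_cancel₀ _ (by linarith : F₁ τ - F₁ t₀ ≠ 0)]
        have hρτ : ρ = t₀ + ε / 2 := by
          apply hF₁mono.injOn hρI hτ₀I
          rw [hρ1]; linear_combination hμd
        rw [hρτ] at hρ2
        linear_combination (F₁ τ - F₁ t₀) * hρ2 + (F₂ τ - F₂ t₀) * hμd
    have hD₂' : F₂ (t₀ + ε / 2) - F₂ t₀ ≠ 0 := ne_of_gt hD₂
    have e : F₁ τ - F₁ t₀
        = (F₁ (t₀ + ε / 2) - F₁ t₀) / (F₂ (t₀ + ε / 2) - F₂ t₀) * (F₂ τ - F₂ t₀) := by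
      rw [div_mul_eq_mul_div, eq_div_iff hD₂']
      linear_combination hkey
    linear_combination e
  · -- easy direction
    rintro ⟨A, B, hA, hAB⟩
    ext f
    simp only [mem_setOf_eq]
    constructor
    · rintro ⟨h1, h2⟩
      refine ⟨h1, ?_⟩
      intro x hx y hy μ hμ
      have hcombo : (1 - μ) • x + μ • y ∈ Ω :=
        hΩconv hx hy (by linarith [hμ.2]) hμ.1 (by ring)
      have hI := h2 x hx y hy μ hμ
      rw [hAB _ (h1 x hx), hAB _ (h1 y hy), hAB _ (h1 _ hcombo)] at hI
      have h3 : A * ((1 - μ) * F₂ (f x) + μ * F₂ (f y))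
          ≤ A * F₂ (f ((1 - μ) • x + μ • y)) := by linarith
      exact le_of_mul_le_mul_left h3 hA
    · rintro ⟨h1, h2⟩
      refine ⟨h1, ?_⟩
      intro x hx y hy μ hμ
      have hcombo : (1 - μ) • x + μ • y ∈ Ω :=
        hΩconv hx hy (by linarith [hμ.2]) hμ.1 (by ring)
      have hI := h2 x hx y hy μ hμ
      rw [hAB _ (h1 x hx), hAB _ (h1 y hy), hAB _ (h1 _ hcombo)]
      have h3 := mul_le_mul_of_nonneg_left hI hA.le
      linarith
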